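/- For a crossed simplicial group ΔG, the pushout-product of two normal monomorphisms of ΔG-sets is a normal monomorphism: given cofibrations f : X → Y and f' : X' → Y', the map (X × Y') ⊔_{X × X'} (Y × X') → Y × Y' is a normal monomorphism; moreover the pushout inclusions X × Y' → P and Y × X' → P are normal monomorphisms. -/

import Mathlib

open CategoryTheory CategoryTheory.Limits Opposite

/-- A crossed simplicial group structure: a category `G` with an embedding of the simplex
category which is bijective on objects, such that every morphism `i[m] ⟶ i[n]` factors
uniquely as `i(φ) ∘ g` with `φ : [m] ⟶ [n]` in `Δ` and `g` an automorphism of `i[m]`. -/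
structure CrossedSimplicialGroup (G : Type) [SmallCategory G] where
  i : SimplexCategory ⥤ G
  faithful : i.Faithful
  bij_obj : Function.Bijective i.obj
  factor : ∀ {m n : SimplexCategory} (u : i.obj m ⟶ i.obj n),
    ∃! p : (m ⟶ n) × (i.obj m ≅ i.obj m), u = p.2.hom ≫ i.map p.1

variable {G : Type} [SmallCategory G]

/-- A normal monomorphism of `ΔG`-sets: a monomorphism `f : X ⟶ Y` such that for every
object `c` the automorphism group of `c` acts freely on `Y(c) \ f(X(c))`. -/
def CrossedNormalMono {X Y : Gᵒᵖ ⥤ Type} (f : X ⟶ Y) : Prop :=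
  Mono f ∧ ∀ (c : G) (y : Y.obj (op c)), y ∉ Set.range (f.app (op c)) →
    ∀ g : c ≅ c, Y.map g.hom.op y = y → g = Iso.refl c

namespace Stmt19Aux

variable {K : Type} [SmallCategory K]

lemma elt_congr {F G : K ⥤ Type} {τ σ : F ⟶ G} (h : τ = σ) (c : K) (z : F.obj c) :
    τ.app c z = σ.app c z := by rw [h]

lemma nat_app {F G : K ⥤ Type} (τ : F ⟶ G) {c c' : K} (h : c ⟶ c') (z : F.obj c) :
    τ.app c' (F.map h z) = G.map h (τ.app c z) :=
  ConcreteCategory.congr_hom (τ.naturality h) z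

noncomputable def pe (F G : K ⥤ Type) (c : K) : (F ⨯ G).obj c ≅ F.obj c × G.obj c :=
  PreservesLimitPair.iso ((evaluation K Type).obj c) F G ≪≫ Types.binaryProductIso _ _

lemma pe_hom (F G : K ⥤ Type) (c : K) (z : (F ⨯ G).obj c) :
    (pe F G c).hom z = ((prod.fst : F ⨯ G ⟶ F).app c z, (prod.snd : F ⨯ G ⟶ G).app c z) := by
  have h1 := ConcreteCategory.congr_hom (Types.binaryProductIso_hom_comp_fst (F.obj c) (G.obj c))
    (prodComparison ((evaluation K Type).obj c) F G z)
  have h2 := ConcreteCategory.congr_hom (prodComparison_fst ((evaluation K Type).obj c) F G) z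
  have h3 := ConcreteCategory.congr_hom (Types.binaryProductIso_hom_comp_snd (F.obj c) (G.obj c))
    (prodComparison ((evaluation K Type).obj c) F G z)
  have h4 := ConcreteCategory.congr_hom (prodComparison_snd ((evaluation K Type).obj c) F G) z
  apply Prod.ext
  · simpa [pe, PreservesLimitPair.iso_hom] using h1.trans h2
  · simpa [pe, PreservesLimitPair.iso_hom] using h3.trans h4

lemma prod_ext {F G : K ⥤ Type} {c : K} {z w : (F ⨯ G).obj c}
    (h1 : (prod.fst : F ⨯ G ⟶ F).app c z = (prod.fst : F ⨯ G ⟶ F).app c w)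
    (h2 : (prod.snd : F ⨯ G ⟶ G).app c z = (prod.snd : F ⨯ G ⟶ G).app c w) : z = w := by
  apply (pe F G c).toEquiv.injective
  simp only [Iso.toEquiv, Equiv.coe_fn_mk, pe_hom, h1, h2]

lemma prod_surj {F G : K ⥤ Type} (c : K) (a : F.obj c) (b : G.obj c) :
    ∃ z : (F ⨯ G).obj c, (prod.fst : F ⨯ G ⟶ F).app c z = a ∧
      (prod.snd : F ⨯ G ⟶ G).app c z = b := by
  obtain ⟨z, hz⟩ := (pe F G c).toEquiv.surjective (a, b)
  refine ⟨z, ?_, ?_⟩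
  · have := (pe_hom F G c z).symm.trans (by rw [show (pe F G c).hom z = (a,b) from hz])
    exact (congr_arg Prod.fst this)
  · have := (pe_hom F G c z).symm.trans (by rw [show (pe F G c).hom z = (a,b) from hz])
    exact (congr_arg Prod.snd this)

lemma map_fst_app {F G F' G' : K ⥤ Type} (u : F ⟶ F') (v : G ⟶ G') (c : K)
    (z : (F ⨯ G).obj c) :
    (prod.fst : F' ⨯ G' ⟶ F').app c ((prod.map u v).app c z)
      = u.app c ((prod.fst : F ⨯ G ⟶ F).app c z) :=
  (elt_congr (prod.map_fst u v) c z).trans rfl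

lemma map_snd_app {F G F' G' : K ⥤ Type} (u : F ⟶ F') (v : G ⟶ G') (c : K)
    (z : (F ⨯ G).obj c) :
    (prod.snd : F' ⨯ G' ⟶ G').app c ((prod.map u v).app c z)
      = v.app c ((prod.snd : F ⨯ G ⟶ G).app c z) :=
  (elt_congr (prod.map_snd u v) c z).trans rfl

lemma pushout_cases {A B C : K ⥤ Type} (p₁ : A ⟶ B) (p₂ : A ⟶ C) (c : K)
    (x : (pushout p₁ p₂).obj c) :
    (∃ b, (pushout.inl p₁ p₂).app c b = x) ∨ (∃ d, (pushout.inr p₁ p₂).app c d = x) := by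
  obtain ⟨j, y, hy⟩ := Types.jointly_surjective_of_isColimit
    (isColimitOfPreserves ((evaluation K Type).obj c) (colimit.isColimit (span p₁ p₂))) x
  cases j with
  | none =>
    left
    refine ⟨p₁.app c y, ?_⟩
    have := elt_congr (colimit.w (span p₁ p₂) WalkingSpan.Hom.fst) c y
    exact this.trans hy
  | some j =>
    cases j with
    | left => exact Or.inl ⟨y, hy⟩
    | right => exact Or.inr ⟨y, hy⟩

end Stmt19Aux

open Stmt19Aux

/-- For a crossed simplicial group, the pushout-product (with respect to the cartesian
product) of two normal monomorphisms `f : X ⟶ Y`, `f' : X' ⟶ Y'` of `ΔG`-sets is a normal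
monomorphism, and moreover the two pushout inclusions `X ⨯ Y' ⟶ P` and `Y ⨯ X' ⟶ P` are
normal monomorphisms. -/
theorem stmt_19 (S : CrossedSimplicialGroup G)
    {X Y X' Y' : Gᵒᵖ ⥤ Type} (f : X ⟶ Y) (f' : X' ⟶ Y')
    (hf : CrossedNormalMono f) (hf' : CrossedNormalMono f') :
    CrossedNormalMono (pushout.inl (prod.map f (𝟙 X')) (prod.map (𝟙 X) f')) ∧
    CrossedNormalMono (pushout.inr (prod.map f (𝟙 X')) (prod.map (𝟙 X) f')) ∧
    CrossedNormalMono (pushout.desc (prod.map (𝟙 Y) f') (prod.map f (𝟙 Y'))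
      (by simp [prod.map_map] :
        prod.map f (𝟙 X') ≫ prod.map (𝟙 Y) f' = prod.map (𝟙 X) f' ≫ prod.map f (𝟙 Y'))) := by
  obtain ⟨hfm, hffree⟩ := hf
  obtain ⟨hf'm, hf'free⟩ := hf'
  haveI := hfm; haveI := hf'm
  set p₁ : X ⨯ X' ⟶ Y ⨯ X' := prod.map f (𝟙 X') with hp₁
  set p₂ : X ⨯ X' ⟶ X ⨯ Y' := prod.map (𝟙 X) f' with hp₂
  haveI : Mono p₁ := by rw [hp₁]; infer_instance
  haveI : Mono p₂ := by rw [hp₂]; infer_instance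
  haveI monoinl : Mono (pushout.inl p₁ p₂) :=
    Adhesive.mono_of_isPushout_of_mono_right (IsPushout.of_hasPushout p₁ p₂)
  haveI monoinr : Mono (pushout.inr p₁ p₂) :=
    Adhesive.mono_of_isPushout_of_mono_left (IsPushout.of_hasPushout p₁ p₂)
  have inl_inj : ∀ c : Gᵒᵖ, Function.Injective ((pushout.inl p₁ p₂).app c) := fun c =>
    (mono_iff_injective _).1 inferInstance
  have inr_inj : ∀ c : Gᵒᵖ, Function.Injective ((pushout.inr p₁ p₂).app c) := fun c =>
    (mono_iff_injective _).1 inferInstance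
  have f_inj : ∀ c : Gᵒᵖ, Function.Injective (f.app c) := fun c =>
    (mono_iff_injective _).1 inferInstance
  have f'_inj : ∀ c : Gᵒᵖ, Function.Injective (f'.app c) := fun c =>
    (mono_iff_injective _).1 inferInstance
  have key : ∀ (c : Gᵒᵖ) (w : (X ⨯ X').obj c),
      (pushout.inl p₁ p₂).app c (p₁.app c w) = (pushout.inr p₁ p₂).app c (p₂.app c w) :=
    fun c w => elt_congr pushout.condition c w
  refine ⟨⟨monoinl, ?_⟩, ⟨monoinr, ?_⟩, ⟨?_, ?_⟩⟩
  · -- freeness for inl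
    intro c y hy g hgfix
    rcases pushout_cases p₁ p₂ (op c) y with ⟨b, hb⟩ | ⟨b, hb⟩
    · exact absurd ⟨b, hb⟩ hy
    · -- y = inr b, b : (X ⨯ Y').obj (op c)
      set b₂ := (prod.snd : X ⨯ Y' ⟶ Y').app (op c) b with hb₂
      have hnot : b₂ ∉ Set.range (f'.app (op c)) := by
        rintro ⟨x', hx'⟩
        obtain ⟨w, hw1, hw2⟩ := prod_surj (op c) ((prod.fst : X ⨯ Y' ⟶ X).app (op c) b) x'
        have hpw : p₂.app (op c) w = b := by
          apply prod_ext
          · rw [hp₂, map_fst_app, hw1]; rfl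
          · rw [hp₂, map_snd_app, hw2, hx']
        exact hy ⟨p₁.app (op c) w, by rw [key, hpw, hb]⟩
      have hmapb : (X ⨯ Y').map g.hom.op b = b := by
        apply inr_inj (op c)
        calc (pushout.inr p₁ p₂).app (op c) ((X ⨯ Y').map g.hom.op b)
            = (pushout p₁ p₂).map g.hom.op ((pushout.inr p₁ p₂).app (op c) b) :=
              nat_app (pushout.inr p₁ p₂) g.hom.op b
          _ = (pushout p₁ p₂).map g.hom.op y := by rw [hb]
          _ = y := hgfix
          _ = (pushout.inr p₁ p₂).app (op c) b := hb.symm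
      have : Y'.map g.hom.op b₂ = b₂ := by
        rw [hb₂, ← nat_app (prod.snd : X ⨯ Y' ⟶ Y') g.hom.op b, hmapb]
      exact hf'free c b₂ hnot g this
  · -- freeness for inr
    intro c y hy g hgfix
    rcases pushout_cases p₁ p₂ (op c) y with ⟨b, hb⟩ | ⟨b, hb⟩
    · set b₁ := (prod.fst : Y ⨯ X' ⟶ Y).app (op c) b with hb₁
      have hnot : b₁ ∉ Set.range (f.app (op c)) := by
        rintro ⟨x, hx⟩
        obtain ⟨w, hw1, hw2⟩ := prod_surj (op c) x ((prod.snd : Y ⨯ X' ⟶ X').app (op c) b)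
        have hpw : p₁.app (op c) w = b := by
          apply prod_ext
          · rw [hp₁, map_fst_app, hw1, hx]
          · rw [hp₁, map_snd_app, hw2]; rfl
        exact hy ⟨p₂.app (op c) w, by rw [← key, hpw, hb]⟩
      have hmapb : (Y ⨯ X').map g.hom.op b = b := by
        apply inl_inj (op c)
        calc (pushout.inl p₁ p₂).app (op c) ((Y ⨯ X').map g.hom.op b)
            = (pushout p₁ p₂).map g.hom.op ((pushout.inl p₁ p₂).app (op c) b) :=
              nat_app (pushout.inl p₁ p₂) g.hom.op b
          _ = (pushout p₁ p₂).map g.hom.op y := by rw [hb]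
          _ = y := hgfix
          _ = (pushout.inl p₁ p₂).app (op c) b := hb.symm
      have : Y.map g.hom.op b₁ = b₁ := by
        rw [hb₁, ← nat_app (prod.fst : Y ⨯ X' ⟶ Y) g.hom.op b, hmapb]
      exact hffree c b₁ hnot g this
    · exact absurd ⟨b, hb⟩ hy
  · -- mono for desc
    have pf : p₁ ≫ prod.map (𝟙 Y) f' = p₂ ≫ prod.map f (𝟙 Y') := by
      rw [hp₁, hp₂]; simp [prod.map_map]
    set q : pushout p₁ p₂ ⟶ Y ⨯ Y' :=
      pushout.desc (prod.map (𝟙 Y) f') (prod.map f (𝟙 Y')) pf with hq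
    have ql : ∀ (c : Gᵒᵖ) (a : (Y ⨯ X').obj c),
        q.app c ((pushout.inl p₁ p₂).app c a) = (prod.map (𝟙 Y) f').app c a :=
      fun c a => elt_congr (pushout.inl_desc _ _ pf) c a
    have qr : ∀ (c : Gᵒᵖ) (a : (X ⨯ Y').obj c),
        q.app c ((pushout.inr p₁ p₂).app c a) = (prod.map f (𝟙 Y')).app c a :=
      fun c a => elt_congr (pushout.inr_desc _ _ pf) c a
    have main : ∀ (c : Gᵒᵖ) (u v : (pushout p₁ p₂).obj c), q.app c u = q.app c v → u = v := by
      intro c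
      have cross : ∀ (a : (Y ⨯ X').obj c) (b : (X ⨯ Y').obj c),
          q.app c ((pushout.inl p₁ p₂).app c a) = q.app c ((pushout.inr p₁ p₂).app c b) →
          (pushout.inl p₁ p₂).app c a = (pushout.inr p₁ p₂).app c b := by
        intro a b huv
        rw [ql, qr] at huv
        have hfst : (prod.fst : Y ⨯ Y' ⟶ Y).app c ((prod.map (𝟙 Y) f').app c a)
            = (prod.fst : Y ⨯ Y' ⟶ Y).app c ((prod.map f (𝟙 Y')).app c b) := by rw [huv]
        have hsnd : (prod.snd : Y ⨯ Y' ⟶ Y').app c ((prod.map (𝟙 Y) f').app c a)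
            = (prod.snd : Y ⨯ Y' ⟶ Y').app c ((prod.map f (𝟙 Y')).app c b) := by rw [huv]
        rw [map_fst_app, map_fst_app] at hfst
        rw [map_snd_app, map_snd_app] at hsnd
        obtain ⟨w, hw1, hw2⟩ := prod_surj c ((prod.fst : X ⨯ Y' ⟶ X).app c b)
          ((prod.snd : Y ⨯ X' ⟶ X').app c a)
        have hpa : p₁.app c w = a := by
          apply prod_ext
          · rw [hp₁, map_fst_app, hw1, ← hfst]; rfl
          · rw [hp₁, map_snd_app, hw2]; rfl
        have hpb : p₂.app c w = b := by
          apply prod_ext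
          · rw [hp₂, map_fst_app, hw1]; rfl
          · rw [hp₂, map_snd_app, hw2, hsnd]
            have : (𝟙 Y' : Y' ⟶ Y').app c ((prod.snd : X ⨯ Y' ⟶ Y').app c b)
                = (prod.snd : X ⨯ Y' ⟶ Y').app c b := rfl
            rw [this]
        rw [← hpa, ← hpb, key]
      intro u v huv
      rcases pushout_cases p₁ p₂ c u with ⟨a, ha⟩ | ⟨a, ha⟩ <;>
        rcases pushout_cases p₁ p₂ c v with ⟨b, hb⟩ | ⟨b, hb⟩
      · subst ha hb
        rw [ql, ql] at huv
        have hfst := congr_arg ((prod.fst : Y ⨯ Y' ⟶ Y).app c) huv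
        have hsnd := congr_arg ((prod.snd : Y ⨯ Y' ⟶ Y').app c) huv
        rw [map_fst_app, map_fst_app] at hfst
        rw [map_snd_app, map_snd_app] at hsnd
        exact congr_arg _ (prod_ext hfst (f'_inj c hsnd))
      · subst ha hb; exact cross a b huv
      · subst ha hb; exact (cross b a huv.symm).symm
      · subst ha hb
        rw [qr, qr] at huv
        have hfst := congr_arg ((prod.fst : Y ⨯ Y' ⟶ Y).app c) huv
        have hsnd := congr_arg ((prod.snd : Y ⨯ Y' ⟶ Y').app c) huv
        rw [map_fst_app, map_fst_app] at hfst
        rw [map_snd_app, map_snd_app] at hsnd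
        exact congr_arg _ (prod_ext (f_inj c hfst) hsnd)
    haveI : ∀ c : Gᵒᵖ, Mono (q.app c) := fun c => (mono_iff_injective _).2 (main c)
    exact NatTrans.mono_of_mono_app q
  · -- freeness for desc
    intro c z hz g hgfix
    set z₁ := (prod.fst : Y ⨯ Y' ⟶ Y).app (op c) z with hz₁
    have hnot : z₁ ∉ Set.range (f.app (op c)) := by
      rintro ⟨x, hx⟩
      obtain ⟨w, hw1, hw2⟩ := prod_surj (op c) x ((prod.snd : Y ⨯ Y' ⟶ Y').app (op c) z)
      have pf : p₁ ≫ prod.map (𝟙 Y) f' = p₂ ≫ prod.map f (𝟙 Y') := by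
        rw [hp₁, hp₂]; simp [prod.map_map]
      refine hz ⟨(pushout.inr p₁ p₂).app (op c) w, ?_⟩
      show (pushout.desc (prod.map (𝟙 Y) f') (prod.map f (𝟙 Y')) pf).app (op c)
        ((pushout.inr p₁ p₂).app (op c) w) = z
      refine Eq.trans (elt_congr (pushout.inr_desc _ _ pf) (op c) w) ?_
      apply prod_ext
      · rw [map_fst_app, hw1, hx]
      · rw [map_snd_app, hw2]; rfl
    have : Y.map g.hom.op z₁ = z₁ := by
      rw [hz₁, ← nat_app (prod.fst : Y ⨯ Y' ⟶ Y) g.hom.op z, hgfix]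
    exact hffree c z₁ hnot g this
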